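/- Let n ≥ 1 and let X ⊆ Y_1 × ⋯ × Y_{n+1} be a Sternfeld-type embedding of a compact metrizable space X with respect to a decomposition X = A_1 ∪ ⋯ ∪ A_{n+1} into zero-dimensional subsets, with induced transformation L. Let Z' be a finite subset of Z and set X' = { x ∈ X : x ∈ A_i and p_i(x) ∈ Z' ∩ Y_i for some i }. Then X' is finite, and for every continuous f : X → ℝ that vanishes at every point of X' there exists a continuous g : Z → ℝ that vanishes at every point of Z' and satisfies L(g) = f. -/

import Mathlib

open Topology Filter

/-- The topology of pointwise convergence on `C(T, ℝ)`: the topology induced from the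
product topology on `ℝ^T` via the canonical injection. -/
def cpTop (T : Type*) [TopologicalSpace T] : TopologicalSpace C(T, ℝ) :=
  TopologicalSpace.induced (fun f => (f : T → ℝ)) Pi.topologicalSpace

/-- A subset `A` of a topological space is zero-dimensional if the subspace `A` has a
topological base consisting of sets clopen in `A`. -/
def ZeroDimSubset {X : Type*} [TopologicalSpace X] (A : Set X) : Prop :=
  ∀ (a : A) (U : Set A), IsOpen U → a ∈ U → ∃ V : Set A, IsClopen V ∧ a ∈ V ∧ V ⊆ U

/-- The transformation induced by an embedding `X ⊆ Y₁ × ⋯ × Y_k`: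
`L g x = g y₁ + ⋯ + g y_k`, where `(y₁, …, y_k)` are the coordinates of `x`, each `yᵢ`
regarded as a point of the disjoint union `Z = Σ i, Y i`. -/
noncomputable def inducedL {ι : Type*} [Fintype ι] {Y : ι → Type*}
    [∀ i, TopologicalSpace (Y i)] (X : Set (Π i, Y i))
    (g : C((Σ i, Y i), ℝ)) : C(X, ℝ) where
  toFun x := ∑ i, g ⟨i, (x : Π i, Y i) i⟩
  continuous_toFun := by
    apply continuous_finset_sum
    intro i _
    exact g.continuous.comp (continuous_sigmaMk.comp
      ((continuous_apply i).comp continuous_subtype_val))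

/-- Given a finite subset `Z'` of `Z`, the set `X' ⊆ X` of points `x ∈ Aᵢ` whose `i`-th
coordinate lies in `Z' ∩ Yᵢ` for some `i`. -/
def sternfeldXPrime {n : ℕ} {Y : Fin (n + 1) → Type*} [∀ i, TopologicalSpace (Y i)]
    (X : Set (Π i, Y i)) (A : Fin (n + 1) → Set X)
    (Z' : Set (Σ i, Y i)) : Set X :=
  {x : X | ∃ i, x ∈ A i ∧ (⟨i, (x : Π j, Y j) i⟩ : Σ j, Y j) ∈ Z'}

section SternfeldAux

variable {n : ℕ} {Y : Fin (n + 1) → Type*}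
    [∀ i, TopologicalSpace (Y i)] [∀ i, CompactSpace (Y i)]
    [∀ i, TopologicalSpace.MetrizableSpace (Y i)]
    (X : Set (Π i, Y i)) [CompactSpace X]

lemma inducedL_apply (g : C((Σ i, Y i), ℝ)) (x : X) :
    inducedL X g x = ∑ i, g ⟨i, (x : Π i, Y i) i⟩ := rfl

lemma norm_inducedL_le (g : C((Σ i, Y i), ℝ)) :
    ‖inducedL X g‖ ≤ ((n : ℝ) + 1) * ‖g‖ := by
  rw [ContinuousMap.norm_le _ (by positivity)]
  intro x
  rw [inducedL_apply]
  calc ‖∑ i, g ⟨i, (x : Π i, Y i) i⟩‖ ≤ ∑ i, ‖g ⟨i, (x : Π i, Y i) i⟩‖ :=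
        norm_sum_le _ _
    _ ≤ ∑ _i : Fin (n+1), ‖g‖ := Finset.sum_le_sum fun i _ => g.norm_coe_le_norm _
    _ = ((n : ℝ) + 1) * ‖g‖ := by
        simp [Finset.sum_const, Finset.card_univ, nsmul_eq_mul]

/-- `inducedL` as a continuous linear map. -/
noncomputable def inducedLclm : C((Σ i, Y i), ℝ) →L[ℝ] C(X, ℝ) :=
  LinearMap.mkContinuous
    { toFun := inducedL X
      map_add' := by
        intro g h
        ext x
        simp [inducedL_apply, ContinuousMap.add_apply, Finset.sum_add_distrib]
      map_smul' := by
        intro c g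
        ext x
        simp [inducedL_apply, Finset.mul_sum] }
    ((n : ℝ) + 1) (norm_inducedL_le X)

lemma inducedLclm_apply (g : C((Σ i, Y i), ℝ)) : inducedLclm X g = inducedL X g := rfl

/-- Evaluation at a point as a continuous linear map. -/
noncomputable def evCLM (z : (Σ i, Y i)) : C((Σ i, Y i), ℝ) →L[ℝ] ℝ :=
  LinearMap.mkContinuous
    { toFun := fun h => h z
      map_add' := fun _ _ => rfl
      map_smul' := fun _ _ => rfl }
    1 (fun h => by simpa using h.norm_coe_le_norm z)

set_option maxHeartbeats 1600000 in
/-- The key one-step approximation lemma. -/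
lemma sternfeldKey (A : Fin (n + 1) → Set X)
    (hcover : ⋃ i, A i = Set.univ)
    (hfiber : ∀ i, ∀ x ∈ A i, ∀ x' : X, (x' : Π j, Y j) i = (x : Π j, Y j) i → x' = x)
    (Z' : Set (Σ i, Y i)) (hZ' : Z'.Finite)
    (f : C(X, ℝ)) (hf : ∀ x ∈ sternfeldXPrime X A Z', f x = 0) :
    ∃ g : C((Σ i, Y i), ℝ), (∀ z ∈ Z', g z = 0) ∧ ‖g‖ ≤ ‖f‖ ∧
      ‖f - inducedL X g‖ ≤ (1 - 1/(3*((n : ℝ)+1))) * ‖f‖ ∧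
      ∀ x : X, f x = 0 → inducedL X g x = 0 := by
  classical
  rcases eq_or_lt_of_le (norm_nonneg f) with hM | hM
  · -- trivial case `f = 0`
    have hf0 : f = 0 := by simpa [norm_eq_zero] using hM.symm
    have hL0 : inducedL X (0 : C((Σ i, Y i), ℝ)) = 0 := by
      ext x; simp [inducedL_apply]
    refine ⟨0, by simp, by simp, ?_, ?_⟩
    · rw [hf0, hL0]; simp
    · intro x _; rw [hL0]; simp
  set M := ‖f‖ with hMdef
  set c : ℝ := M / (3 * ((n : ℝ) + 1)) with hc
  have hn0 : (0:ℝ) ≤ (n:ℝ) := Nat.cast_nonneg n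
  have hden : (0:ℝ) < 3 * ((n : ℝ) + 1) := by positivity
  have hc0 : 0 < c := by positivity
  have hceq : c * (3 * ((n : ℝ) + 1)) = M := by
    rw [hc]; field_simp
  have hcM3 : c ≤ M / 3 := by nlinarith [hc0.le]
  have hc1M : ((n : ℝ) + 1) * c = M / 3 := by
    rw [hc]; field_simp
  -- the set where `|f|` is large
  set K : Set X := {x | 2 * M / 3 ≤ |f x|} with hK
  have hKclosed : IsClosed K := isClosed_le continuous_const f.continuous.abs
  have hKcomp : IsCompact K := hKclosed.isCompact
  have hfK : ∀ x ∈ K, f x ≠ 0 := by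
    intro x hx h0
    have : 2 * M / 3 ≤ |f x| := hx
    rw [h0] at this
    simp at this
    linarith
  -- choice of tubes around points of K
  have main : ∀ x : X, x ∈ K → ∃ (i : Fin (n+1)) (V : Set (Y i)),
      IsOpen V ∧ (x : Π j, Y j) i ∈ V ∧
      (∀ y ∈ closure V, (⟨i, y⟩ : Σ j, Y j) ∉ Z') ∧
      (∀ x' : X, (x' : Π j, Y j) i ∈ closure V → |f x' - f x| < M / 3) := by
    intro x hx
    obtain ⟨i, hAi⟩ : ∃ i, x ∈ A i := by
      have hxu : x ∈ ⋃ i, A i := by rw [hcover]; exact Set.mem_univ x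
      exact Set.mem_iUnion.mp hxu
    set p : X → Y i := fun x' => (x' : Π j, Y j) i with hp
    have hpc : Continuous p := (continuous_apply i).comp continuous_subtype_val
    set U : Set X := {x' | |f x' - f x| < M / 3} with hU
    have hUopen : IsOpen U := by
      have : Continuous fun x' : X => |f x' - f x| :=
        (f.continuous.sub continuous_const).abs
      exact isOpen_lt this continuous_const
    have hxU : x ∈ U := by
      simp only [hU, Set.mem_setOf_eq, sub_self, abs_zero]
      positivity
    have hUcc : IsCompact (Uᶜ : Set X) := hUopen.isClosed_compl.isCompact
    set W0 : Set (Y i) := (p '' Uᶜ)ᶜ with hW0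
    have hW0open : IsOpen W0 := (hUcc.image hpc).isClosed.isOpen_compl
    have hyW0 : p x ∈ W0 := by
      intro hmem
      obtain ⟨x', hx'U, hpx'⟩ := hmem
      exact hx'U (hfiber i x hAi x' hpx' ▸ hxU)
    have hpre : ∀ x' : X, p x' ∈ W0 → x' ∈ U := by
      intro x' hx'
      by_contra h
      exact hx' (Set.mem_image_of_mem p h)
    set Q : Set (Y i) := Sigma.mk i ⁻¹' Z' with hQ
    have hQfin : Q.Finite := hZ'.preimage (Set.injOn_of_injective sigma_mk_injective)
    have hQclosed : IsClosed Q := hQfin.isClosed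
    have hyQ : p x ∉ Q := by
      intro hmem
      exact hfK x hx (hf x ⟨i, hAi, hmem⟩)
    have hW1open : IsOpen (W0 \ Q) := hW0open.sdiff hQclosed
    have hyW1 : p x ∈ W0 \ Q := ⟨hyW0, hyQ⟩
    obtain ⟨V, hVopen, hxV, hVsub⟩ := normal_exists_closure_subset
      (isClosed_singleton (x := p x)) hW1open (Set.singleton_subset_iff.mpr hyW1)
    refine ⟨i, V, hVopen, hxV rfl, ?_, ?_⟩
    · intro y hy hyZ
      exact (hVsub hy).2 hyZ
    · intro x' hx'
      exact hpre x' (hVsub hx').1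
  choose idx V hVopen hxV hVZ hVosc using main
  -- finite subcover by tubes
  have hcovK : K ⊆ ⋃ k : K, (fun x' : X => (x' : Π j, Y j) (idx k.1 k.2)) ⁻¹' V k.1 k.2 := by
    intro x hx
    exact Set.mem_iUnion.mpr ⟨⟨x, hx⟩, hxV x hx⟩
  obtain ⟨t, ht⟩ := hKcomp.elim_finite_subcover
    (fun k : K => (fun x' : X => (x' : Π j, Y j) (idx k.1 k.2)) ⁻¹' V k.1 k.2)
    (fun k => (hVopen k.1 k.2).preimage ((continuous_apply _).comp continuous_subtype_val))
    hcovK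
  -- the closed sets in the disjoint union
  set Ep : Set (Σ i, Y i) := {z | ∃ x : X, (x : Π j, Y j) z.1 = z.2 ∧ 0 ≤ f x} with hEp
  set En : Set (Σ i, Y i) := {z | ∃ x : X, (x : Π j, Y j) z.1 = z.2 ∧ f x ≤ 0} with hEn
  have hEpclosed : IsClosed Ep := by
    rw [isClosed_sigma_iff]
    intro j
    have : Sigma.mk j ⁻¹' Ep = (fun x : X => (x : Π j', Y j') j) '' {x | 0 ≤ f x} := by
      ext y
      simp only [Set.mem_preimage, hEp, Set.mem_setOf_eq, Set.mem_image]
      constructor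
      · rintro ⟨x, h1, h2⟩; exact ⟨x, h2, h1⟩
      · rintro ⟨x, h2, h1⟩; exact ⟨x, h1, h2⟩
    rw [this]
    exact (((isClosed_le continuous_const f.continuous).isCompact).image
      ((continuous_apply j).comp continuous_subtype_val)).isClosed
  have hEnclosed : IsClosed En := by
    rw [isClosed_sigma_iff]
    intro j
    have : Sigma.mk j ⁻¹' En = (fun x : X => (x : Π j', Y j') j) '' {x | f x ≤ 0} := by
      ext y
      simp only [Set.mem_preimage, hEn, Set.mem_setOf_eq, Set.mem_image]
      constructor
      · rintro ⟨x, h1, h2⟩; exact ⟨x, h2, h1⟩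
      · rintro ⟨x, h2, h1⟩; exact ⟨x, h1, h2⟩
    rw [this]
    exact (((isClosed_le f.continuous continuous_const).isCompact).image
      ((continuous_apply j).comp continuous_subtype_val)).isClosed
  have hZ'closed : IsClosed Z' := hZ'.isClosed
  have hSclosed : ∀ k : K, IsClosed (Sigma.mk (idx k.1 k.2) '' closure (V k.1 k.2)) :=
    fun k => isClosedMap_sigmaMk _ isClosed_closure
  -- Urysohn functions
  have hUry : ∀ k : K, k ∈ t → ∃ u : C((Σ i, Y i), ℝ),
      (∀ z, u z ∈ Set.Icc (0:ℝ) 1) ∧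
      (∀ z ∈ Sigma.mk (idx k.1 k.2) '' closure (V k.1 k.2), u z = 1) ∧
      (∀ z ∈ Z', u z = 0) ∧
      (0 < f k.1 → ∀ z ∈ En, u z = 0) ∧
      (f k.1 < 0 → ∀ z ∈ Ep, u z = 0) := by
    intro k _
    have hkK : (k : X) ∈ K := k.2
    have hkabs : 2 * M / 3 ≤ |f k.1| := hkK
    rcases lt_or_ge 0 (f k.1) with hpos | hnonpos
    · -- positive case: u = 0 on En ∪ Z', u = 1 on S k
      have hdisj : Disjoint (En ∪ Z') (Sigma.mk (idx k.1 k.2) '' closure (V k.1 k.2)) := by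
        rw [Set.disjoint_right]
        rintro z ⟨y, hy, rfl⟩
        rintro (⟨x', hx'1, hx'2⟩ | hzZ)
        · have hosc := hVosc k.1 k.2 x' (by rw [hx'1]; exact hy)
          have habs : |f k.1| = f k.1 := abs_of_pos hpos
          have h1 : f k.1 - f x' ≤ |f x' - f k.1| := by
            rw [abs_sub_comm]; exact le_abs_self _
          linarith [hkabs, hosc, hx'2, habs ▸ hkabs]
        · exact hVZ k.1 k.2 y hy hzZ
      obtain ⟨u, hu0, hu1, hu2⟩ := exists_continuous_zero_one_of_isClosed
        (hEnclosed.union hZ'closed) (hSclosed k) hdisj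
      refine ⟨u, hu2, fun z hz => by simpa using hu1 hz, ?_, ?_, ?_⟩
      · intro z hz; simpa using hu0 (Set.mem_union_right _ hz)
      · intro _ z hz; simpa using hu0 (Set.mem_union_left _ hz)
      · intro hneg; exact absurd hpos (not_lt.mpr hneg.le)
    · -- negative case
      have hneg : f k.1 < 0 := by
        rcases lt_or_eq_of_le hnonpos with h | h
        · exact h
        · exact absurd h (hfK k.1 hkK)
      have hdisj : Disjoint (Ep ∪ Z') (Sigma.mk (idx k.1 k.2) '' closure (V k.1 k.2)) := by
        rw [Set.disjoint_right]
        rintro z ⟨y, hy, rfl⟩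
        rintro (⟨x', hx'1, hx'2⟩ | hzZ)
        · have hosc := hVosc k.1 k.2 x' (by rw [hx'1]; exact hy)
          have habs : |f k.1| = -(f k.1) := abs_of_neg hneg
          have h1 : f x' - f k.1 ≤ |f x' - f k.1| := le_abs_self _
          linarith [hkabs, hosc, hx'2, habs ▸ hkabs]
        · exact hVZ k.1 k.2 y hy hzZ
      obtain ⟨u, hu0, hu1, hu2⟩ := exists_continuous_zero_one_of_isClosed
        (hEpclosed.union hZ'closed) (hSclosed k) hdisj
      refine ⟨u, hu2, fun z hz => by simpa using hu1 hz, ?_, ?_, ?_⟩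
      · intro z hz; simpa using hu0 (Set.mem_union_right _ hz)
      · intro hpos; exact absurd hpos (not_lt.mpr hnonpos)
      · intro _ z hz; simpa using hu0 (Set.mem_union_left _ hz)
  choose! u hu01 huS huZ huEn huEp using hUry
  set tp : Finset K := t.filter (fun k => 0 < f k.1) with htp
  set tm : Finset K := t.filter (fun k => f k.1 < 0) with htm
  -- the approximating function
  set gp : (Σ i, Y i) → ℝ := fun z => min 1 (∑ k ∈ tp, u k z) with hgp
  set gm : (Σ i, Y i) → ℝ := fun z => min 1 (∑ k ∈ tm, u k z) with hgm
  have hgpeq : ∀ z, gp z = min 1 (∑ k ∈ tp, u k z) := fun _ => rfl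
  have hgmeq : ∀ z, gm z = min 1 (∑ k ∈ tm, u k z) := fun _ => rfl
  have hgpcont : Continuous gp :=
    continuous_const.min (continuous_finset_sum _ fun k _ => (u k).continuous)
  have hgmcont : Continuous gm :=
    continuous_const.min (continuous_finset_sum _ fun k _ => (u k).continuous)
  set g0 : C((Σ i, Y i), ℝ) :=
    ⟨fun z => c * (gp z - gm z), continuous_const.mul (hgpcont.sub hgmcont)⟩ with hg0
  have hg0app : ∀ z, g0 z = c * (gp z - gm z) := fun z => rfl
  -- basic bounds on gp, gm
  have hgp01 : ∀ z, 0 ≤ gp z ∧ gp z ≤ 1 := by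
    intro z
    constructor
    · exact le_min zero_le_one (Finset.sum_nonneg fun k hk =>
        (hu01 k (Finset.mem_filter.mp hk).1 z).1)
    · exact min_le_left _ _
  have hgm01 : ∀ z, 0 ≤ gm z ∧ gm z ≤ 1 := by
    intro z
    constructor
    · exact le_min zero_le_one (Finset.sum_nonneg fun k hk =>
        (hu01 k (Finset.mem_filter.mp hk).1 z).1)
    · exact min_le_left _ _
  -- vanishing on Z'
  have hg0Z : ∀ z ∈ Z', g0 z = 0 := by
    intro z hz
    have h1 : gp z = 0 := by
      rw [hgpeq]
      have : (∑ k ∈ tp, u k z) = 0 := Finset.sum_eq_zero fun k hk =>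
        huZ k (Finset.mem_filter.mp hk).1 z hz
      rw [this]; exact min_eq_right zero_le_one
    have h2 : gm z = 0 := by
      rw [hgmeq]
      have : (∑ k ∈ tm, u k z) = 0 := Finset.sum_eq_zero fun k hk =>
        huZ k (Finset.mem_filter.mp hk).1 z hz
      rw [this]; exact min_eq_right zero_le_one
    rw [hg0app, h1, h2]; ring
  -- coordinate bounds
  have hcoordPos : ∀ x : X, 0 ≤ f x → ∀ j : Fin (n+1),
      0 ≤ g0 ⟨j, (x : Π j', Y j') j⟩ ∧ g0 ⟨j, (x : Π j', Y j') j⟩ ≤ c := by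
    intro x h0 j
    set z : (Σ i, Y i) := ⟨j, (x : Π j', Y j') j⟩ with hz
    have hzEp : z ∈ Ep := ⟨x, rfl, h0⟩
    have hgmz : gm z = 0 := by
      rw [hgmeq]
      have : (∑ k ∈ tm, u k z) = 0 := Finset.sum_eq_zero fun k hk =>
        huEp k (Finset.mem_filter.mp hk).1 (Finset.mem_filter.mp hk).2 z hzEp
      rw [this]; exact min_eq_right zero_le_one
    rw [hg0app, hgmz, sub_zero]
    exact ⟨mul_nonneg hc0.le (hgp01 z).1, mul_le_of_le_one_right hc0.le (hgp01 z).2⟩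
  have hcoordNeg : ∀ x : X, f x ≤ 0 → ∀ j : Fin (n+1),
      -c ≤ g0 ⟨j, (x : Π j', Y j') j⟩ ∧ g0 ⟨j, (x : Π j', Y j') j⟩ ≤ 0 := by
    intro x h0 j
    set z : (Σ i, Y i) := ⟨j, (x : Π j', Y j') j⟩ with hz
    have hzEn : z ∈ En := ⟨x, rfl, h0⟩
    have hgpz : gp z = 0 := by
      rw [hgpeq]
      have : (∑ k ∈ tp, u k z) = 0 := Finset.sum_eq_zero fun k hk =>
        huEn k (Finset.mem_filter.mp hk).1 (Finset.mem_filter.mp hk).2 z hzEn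
      rw [this]; exact min_eq_right zero_le_one
    rw [hg0app, hgpz, zero_sub]
    constructor
    · have := (hgm01 z).2
      nlinarith [hc0.le]
    · have := (hgm01 z).1
      nlinarith [hc0.le]
  -- sums of coordinate values
  have hLsum : ∀ x : X, inducedL X g0 x = ∑ j, g0 ⟨j, (x : Π j', Y j') j⟩ := fun x => rfl
  have hLboundPos : ∀ x : X, 0 ≤ f x →
      0 ≤ inducedL X g0 x ∧ inducedL X g0 x ≤ M / 3 := by
    intro x h0
    rw [hLsum]
    constructor
    · exact Finset.sum_nonneg fun j _ => (hcoordPos x h0 j).1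
    · calc (∑ j, g0 ⟨j, (x : Π j', Y j') j⟩) ≤ ∑ _j : Fin (n+1), c :=
            Finset.sum_le_sum fun j _ => (hcoordPos x h0 j).2
        _ = ((n : ℝ) + 1) * c := by
            simp [Finset.sum_const, Finset.card_univ, nsmul_eq_mul]
        _ = M / 3 := hc1M
  have hLboundNeg : ∀ x : X, f x ≤ 0 →
      -(M / 3) ≤ inducedL X g0 x ∧ inducedL X g0 x ≤ 0 := by
    intro x h0
    rw [hLsum]
    constructor
    · calc -(M/3) = ∑ _j : Fin (n+1), (-c) := by
            simp [Finset.sum_const, Finset.card_univ, nsmul_eq_mul]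
            linarith [hc1M]
        _ ≤ ∑ j, g0 ⟨j, (x : Π j', Y j') j⟩ :=
            Finset.sum_le_sum fun j _ => (hcoordNeg x h0 j).1
    · exact Finset.sum_nonpos fun j _ => (hcoordNeg x h0 j).2
  -- key lower bound on K
  have hKeyPos : ∀ x : X, x ∈ K → 0 < f x → c ≤ inducedL X g0 x := by
    intro x hx hpos
    obtain ⟨k, hkt, hxT⟩ : ∃ k ∈ t,
        x ∈ (fun x' : X => (x' : Π j, Y j) (idx k.1 k.2)) ⁻¹' V k.1 k.2 := by
      have := ht hx
      simpa using this
    set i : Fin (n+1) := idx k.1 k.2 with hi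
    have hxV' : (x : Π j, Y j) i ∈ V k.1 k.2 := hxT
    have hosc := hVosc k.1 k.2 x (subset_closure hxV')
    have hxabs : 2 * M / 3 ≤ f x := by
      have := hx
      rw [hK, Set.mem_setOf_eq, abs_of_pos hpos] at this
      exact this
    have hfk : M / 3 < f k.1 := by
      have h1 : f x - f k.1 ≤ |f x - f k.1| := le_abs_self _
      linarith
    have hktp : k ∈ tp := Finset.mem_filter.mpr ⟨hkt, by linarith⟩
    set z : (Σ i', Y i') := ⟨i, (x : Π j', Y j') i⟩ with hzdef
    have hzS : z ∈ Sigma.mk i '' closure (V k.1 k.2) :=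
      ⟨(x : Π j', Y j') i, subset_closure hxV', rfl⟩
    have huk1 : u k z = 1 := huS k hkt z hzS
    have hgpz : gp z = 1 := by
      rw [hgpeq]
      have hge : (1:ℝ) ≤ ∑ k' ∈ tp, u k' z := by
        have h := Finset.single_le_sum (f := fun k' => u k' z)
          (fun k' hk' => (hu01 k' (Finset.mem_filter.mp hk').1 z).1) hktp
        simpa [huk1] using h
      exact min_eq_left hge
    have hzEp : z ∈ Ep := ⟨x, rfl, hpos.le⟩
    have hgmz : gm z = 0 := by
      rw [hgmeq]
      have : (∑ k' ∈ tm, u k' z) = 0 := Finset.sum_eq_zero fun k' hk' =>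
        huEp k' (Finset.mem_filter.mp hk').1 (Finset.mem_filter.mp hk').2 z hzEp
      rw [this]; exact min_eq_right zero_le_one
    have hg0z : g0 z = c := by rw [hg0app, hgpz, hgmz]; ring
    rw [hLsum]
    calc c = g0 z := hg0z.symm
      _ ≤ ∑ j, g0 ⟨j, (x : Π j', Y j') j⟩ :=
          Finset.single_le_sum (f := fun j => g0 ⟨j, (x : Π j', Y j') j⟩)
            (fun j _ => (hcoordPos x hpos.le j).1) (Finset.mem_univ i)
  have hKeyNeg : ∀ x : X, x ∈ K → f x < 0 → inducedL X g0 x ≤ -c := by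
    intro x hx hneg
    obtain ⟨k, hkt, hxT⟩ : ∃ k ∈ t,
        x ∈ (fun x' : X => (x' : Π j, Y j) (idx k.1 k.2)) ⁻¹' V k.1 k.2 := by
      have := ht hx
      simpa using this
    set i : Fin (n+1) := idx k.1 k.2 with hi
    have hxV' : (x : Π j, Y j) i ∈ V k.1 k.2 := hxT
    have hosc := hVosc k.1 k.2 x (subset_closure hxV')
    have hxabs : 2 * M / 3 ≤ -(f x) := by
      have := hx
      rw [hK, Set.mem_setOf_eq, abs_of_neg hneg] at this
      exact this
    have hfk : f k.1 < -(M / 3) := by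
      have h1 : f k.1 - f x ≤ |f x - f k.1| := by
        rw [abs_sub_comm]; exact le_abs_self _
      linarith
    have hktm : k ∈ tm := Finset.mem_filter.mpr ⟨hkt, by linarith⟩
    set z : (Σ i', Y i') := ⟨i, (x : Π j', Y j') i⟩ with hzdef
    have hzS : z ∈ Sigma.mk i '' closure (V k.1 k.2) :=
      ⟨(x : Π j', Y j') i, subset_closure hxV', rfl⟩
    have huk1 : u k z = 1 := huS k hkt z hzS
    have hgmz : gm z = 1 := by
      rw [hgmeq]
      have hge : (1:ℝ) ≤ ∑ k' ∈ tm, u k' z := by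
        have h := Finset.single_le_sum (f := fun k' => u k' z)
          (fun k' hk' => (hu01 k' (Finset.mem_filter.mp hk').1 z).1) hktm
        simpa [huk1] using h
      exact min_eq_left hge
    have hzEn : z ∈ En := ⟨x, rfl, hneg.le⟩
    have hgpz : gp z = 0 := by
      rw [hgpeq]
      have : (∑ k' ∈ tp, u k' z) = 0 := Finset.sum_eq_zero fun k' hk' =>
        huEn k' (Finset.mem_filter.mp hk').1 (Finset.mem_filter.mp hk').2 z hzEn
      rw [this]; exact min_eq_right zero_le_one
    have hg0z : g0 z = -c := by rw [hg0app, hgpz, hgmz]; ring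
    rw [hLsum]
    have hneglb : (∑ j, g0 ⟨j, (x : Π j', Y j') j⟩) ≤ g0 z := by
      have h := Finset.single_le_sum (f := fun j => -(g0 ⟨j, (x : Π j', Y j') j⟩))
        (fun j _ => neg_nonneg.mpr (hcoordNeg x hneg.le j).2) (Finset.mem_univ i)
      have h2 : -(g0 z) ≤ -∑ j, g0 ⟨j, (x : Π j', Y j') j⟩ := by
        simpa [Finset.sum_neg_distrib] using h
      linarith
    rw [hg0z] at hneglb
    exact hneglb
  -- pointwise estimate
  have hfabs : ∀ x : X, |f x| ≤ M := fun x => by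
    simpa [Real.norm_eq_abs] using f.norm_coe_le_norm x
  have hpt : ∀ x : X, |f x - inducedL X g0 x| ≤ M - c := by
    intro x
    rcases le_or_gt 0 (f x) with h0 | h0
    · obtain ⟨hL0, hL1⟩ := hLboundPos x h0
      rw [abs_le]
      constructor
      · have := hfabs x
        linarith
      · by_cases hxK : 2 * M / 3 ≤ f x
        · have hxmem : x ∈ K := by
            rw [hK, Set.mem_setOf_eq, abs_of_nonneg h0]; exact hxK
          have hpos : 0 < f x := by linarith
          have := hKeyPos x hxmem hpos
          have := hfabs x
          have : f x ≤ M := by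
            have h := hfabs x
            rw [abs_of_nonneg h0] at h
            exact h
          linarith [hKeyPos x hxmem hpos]
        · push_neg at hxK
          linarith
    · obtain ⟨hL0, hL1⟩ := hLboundNeg x h0.le
      rw [abs_le]
      constructor
      · by_cases hxK : f x ≤ -(2 * M / 3)
        · have hxmem : x ∈ K := by
            rw [hK, Set.mem_setOf_eq, abs_of_neg h0]; linarith
          have hfxM : -M ≤ f x := by
            have h := hfabs x
            rw [abs_of_neg h0] at h
            linarith
          linarith [hKeyNeg x hxmem h0]
        · push_neg at hxK
          linarith
      · have := hfabs x
        linarith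
  -- conclude
  have hrM : M - c = (1 - 1/(3*((n : ℝ)+1))) * M := by
    rw [hc]; field_simp
  refine ⟨g0, hg0Z, ?_, ?_, ?_⟩
  · rw [ContinuousMap.norm_le _ (norm_nonneg f)]
    intro z
    rw [hg0app, Real.norm_eq_abs, abs_mul, abs_of_pos hc0]
    have h1 := hgp01 z
    have h2 := hgm01 z
    have habs : |gp z - gm z| ≤ 1 := by
      rw [abs_le]; constructor <;> linarith [h1.1, h1.2, h2.1, h2.2]
    calc c * |gp z - gm z| ≤ c * 1 := by nlinarith [hc0.le]
      _ = c := mul_one c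
      _ ≤ M := by nlinarith [hc0.le, hn0, hceq]
  · rw [← hrM, ContinuousMap.norm_le _ (by linarith [hcM3, hM] : (0:ℝ) ≤ M - c)]
    intro x
    simpa [Real.norm_eq_abs] using hpt x
  · intro x hx0
    have h1 := hLboundPos x hx0.ge
    have h2 := hLboundNeg x hx0.le
    linarith [h1.1, h1.2, h2.1, h2.2]

end SternfeldAux

set_option maxHeartbeats 1600000 in
/-- Key step in the proof of openness for Sternfeld-type embeddings: if `Z' ⊆ Z` is finite
and `X' = {x ∈ X : x ∈ Aᵢ and pᵢ(x) ∈ Z' ∩ Yᵢ for some i}`, then `X'` is finite and every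
continuous `f : X → ℝ` vanishing on `X'` equals `L g` for some continuous `g : Z → ℝ`
vanishing on `Z'`. -/
theorem statement6 {n : ℕ} (hn : 1 ≤ n) {Y : Fin (n + 1) → Type*}
    [∀ i, TopologicalSpace (Y i)] [∀ i, CompactSpace (Y i)]
    [∀ i, TopologicalSpace.MetrizableSpace (Y i)]
    (X : Set (Π i, Y i)) [CompactSpace X]
    (A : Fin (n + 1) → Set X) (hA : ∀ i, ZeroDimSubset (A i))
    (hcover : ⋃ i, A i = Set.univ)
    (hfiber : ∀ i, ∀ x ∈ A i, ∀ x' : X, (x' : Π j, Y j) i = (x : Π j, Y j) i → x' = x)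
    (Z' : Set (Σ i, Y i)) (hZ' : Z'.Finite) :
    (sternfeldXPrime X A Z').Finite ∧
    ∀ (f : C(X, ℝ)), (∀ x ∈ sternfeldXPrime X A Z', f x = 0) →
      ∃ g : C((Σ i, Y i), ℝ), (∀ z ∈ Z', g z = 0) ∧ inducedL X g = f := by
  classical
  constructor
  · -- finiteness of X'
    have hsub : sternfeldXPrime X A Z' ⊆
        ⋃ z ∈ Z', {x : X | (x : Π j, Y j) z.1 = z.2 ∧ x ∈ A z.1} := by
      rintro x ⟨i, hAi, hZ⟩
      exact Set.mem_biUnion hZ ⟨rfl, hAi⟩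
    refine Set.Finite.subset (Set.Finite.biUnion hZ' fun z _ => ?_) hsub
    apply Set.Subsingleton.finite
    rintro x ⟨hx1, hx2⟩ x' ⟨hx'1, hx'2⟩
    exact (hfiber z.1 x' hx'2 x (by rw [hx1, hx'1])).symm ▸ rfl
  · -- surjectivity
    intro f hf
    set r : ℝ := 1 - 1/(3*((n : ℝ)+1)) with hr
    have hn0 : (0:ℝ) ≤ (n:ℝ) := Nat.cast_nonneg n
    have hden : (0:ℝ) < 3 * ((n : ℝ) + 1) := by positivity
    have hinv : 0 < 1/(3*((n : ℝ)+1)) := by positivity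
    have hinv1 : 1/(3*((n : ℝ)+1)) ≤ 1/3 := by
      rw [div_le_div_iff₀ hden (by norm_num : (0:ℝ) < 3)]
      nlinarith
    have hr0 : 0 ≤ r := by
      rw [hr]; linarith
    have hr1 : r < 1 := by
      rw [hr]; linarith
    -- the recursive sequence
    set T := {h : C(X, ℝ) // ∀ x ∈ sternfeldXPrime X A Z', h x = 0} with hT
    have step : ∀ h : T, ∃ g : C((Σ i, Y i), ℝ), (∀ z ∈ Z', g z = 0) ∧ ‖g‖ ≤ ‖h.1‖ ∧
        ‖h.1 - inducedL X g‖ ≤ r * ‖h.1‖ ∧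
        ∀ x : X, h.1 x = 0 → inducedL X g x = 0 :=
      fun h => sternfeldKey X A hcover hfiber Z' hZ' h.1 h.2
    choose G hG1 hG2 hG3 hG4 using step
    set F : ℕ → T := fun k => Nat.rec (⟨f, hf⟩ : T)
      (fun _ h => ⟨h.1 - inducedL X (G h), fun x hx => by
        rw [ContinuousMap.sub_apply, h.2 x hx, hG4 h x (h.2 x hx), sub_zero]⟩) k with hF
    have hFzero : (F 0).1 = f := rfl
    have hFsucc : ∀ k, (F (k+1)).1 = (F k).1 - inducedL X (G (F k)) := fun k => rfl
    have hFnorm : ∀ k, ‖(F k).1‖ ≤ r ^ k * ‖f‖ := by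
      intro k
      induction k with
      | zero => simp [hFzero]
      | succ k ih =>
          calc ‖(F (k+1)).1‖ ≤ r * ‖(F k).1‖ := by rw [hFsucc]; exact hG3 (F k)
            _ ≤ r * (r ^ k * ‖f‖) := mul_le_mul_of_nonneg_left ih hr0
            _ = r ^ (k+1) * ‖f‖ := by ring
    have hGsum : Summable fun k => G (F k) := by
      apply Summable.of_norm_bounded
        ((summable_geometric_of_lt_one hr0 hr1).mul_right ‖f‖)
      intro k
      exact (hG2 (F k)).trans (hFnorm k)
    set g : C((Σ i, Y i), ℝ) := ∑' k, G (F k) with hg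
    have hHS : HasSum (fun k => G (F k)) g := hGsum.hasSum
    -- vanishing on Z'
    have hgZ : ∀ z ∈ Z', g z = 0 := by
      intro z hz
      have h1 : HasSum (fun k => evCLM (n := n) (Y := Y) z (G (F k))) (evCLM (n := n) (Y := Y) z g) :=
        (evCLM (n := n) (Y := Y) z).hasSum hHS
      have h2 : (fun k => evCLM (n := n) (Y := Y) z (G (F k))) = fun _ => (0:ℝ) := by
        funext k
        exact hG1 (F k) z hz
      rw [h2] at h1
      have := h1.tsum_eq
      rw [tsum_zero] at this
      exact this.symm
    refine ⟨g, hgZ, ?_⟩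
    -- L g = f
    have hLHS : HasSum (fun k => inducedLclm X (G (F k))) (inducedLclm X g) :=
      (inducedLclm X).hasSum hHS
    have hLk : ∀ k, inducedLclm X (G (F k)) = (F k).1 - (F (k+1)).1 := by
      intro k
      rw [inducedLclm_apply, hFsucc]
      ring
    have htel : Tendsto (fun N => ∑ k ∈ Finset.range N, inducedLclm X (G (F k)))
        atTop (𝓝 (f - 0)) := by
      have heq : (fun N => ∑ k ∈ Finset.range N, inducedLclm X (G (F k)))
          = fun N => f - (F N).1 := by
        funext N
        calc (∑ k ∈ Finset.range N, inducedLclm X (G (F k)))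
            = ∑ k ∈ Finset.range N, ((F k).1 - (F (k+1)).1) := by
              exact Finset.sum_congr rfl fun k _ => hLk k
          _ = (F 0).1 - (F N).1 := Finset.sum_range_sub' (fun k => (F k).1) N
          _ = f - (F N).1 := by rw [hFzero]
      rw [heq]
      apply Tendsto.const_sub
      apply squeeze_zero_norm hFnorm
      have := (tendsto_pow_atTop_nhds_zero_of_lt_one hr0 hr1).mul_const ‖f‖
      simpa using this
    have := hLHS.tendsto_sum_nat
    have hfeq : inducedLclm X g = f - 0 := tendsto_nhds_unique this htel
    rw [sub_zero] at hfeq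
    rw [← inducedLclm_apply]
    exact hfeq
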